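/- Let f ∈ C¹(ℝ) be bounded with bounded derivative, f̂ its Engquist–Osher flux, and k ∈ L^∞(ℝ) ∩ BV(ℝ) with cell averages k_{j+1/2}. Let (u^n_j) be grid values vanishing for |j| sufficiently large, and let h^n_{j+1/2} = k_{j+1/2} f̂^n_{j+1/2} be the sign-adapted numerical flux. Then for every n: Δt·‖D₋h^n‖² ≤ 4λ·‖k‖_∞·‖f‖_∞²·TV(k) + 4Δt·‖k‖_∞²·‖f′‖_∞²·(‖D₋u^n‖² + ‖D₊u^n‖²), where TV(k) is the total variation of k and ‖·‖ is the discrete ℓ² norm. -/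

import Mathlib

open MeasureTheory Filter Set

noncomputable section

/-- The sup-norm `‖g‖_∞` of a function `g : ℝ → ℝ`. -/
def supNorm (g : ℝ → ℝ) : ℝ := ⨆ x, |g x|

/-- The total variation `TV(k)` of a function `k : ℝ → ℝ`. -/
def totalVar (k : ℝ → ℝ) : ℝ := (eVariationOn k Set.univ).toReal

/-- The Engquist–Osher numerical flux associated to `f`. -/
def eoFlux (f : ℝ → ℝ) (u v : ℝ) : ℝ :=
  (f u + f v) / 2 - (∫ s in u..v, |deriv f s|) / 2

/-- The cell averages `k_{j+1/2} = (1/Δx) ∫_{x_j}^{x_{j+1}} k`. -/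
def kAvg (k : ℝ → ℝ) (dx : ℝ) (j : ℤ) : ℝ :=
  (1 / dx) * ∫ x in ((j : ℝ) * dx)..((j : ℝ) * dx + dx), k x

/-- The sign-adapted Engquist–Osher flux `f̂_{j+1/2}`, with arguments transposed when the
coefficient `kh j` is negative. -/
def signFlux (f : ℝ → ℝ) (kh : ℤ → ℝ) (v : ℤ → ℝ) (j : ℤ) : ℝ :=
  if 0 ≤ kh j then eoFlux f (v j) (v (j + 1)) else eoFlux f (v (j + 1)) (v j)

/-- The numerical flux `h_{j+1/2} = k_{j+1/2} f̂_{j+1/2}`. -/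
def numFlux (f k : ℝ → ℝ) (dx : ℝ) (v : ℤ → ℝ) (j : ℤ) : ℝ :=
  kAvg k dx j * signFlux f (kAvg k dx) v j

/-- Backward difference `D₋v_j = (v_j - v_{j-1})/Δx`. -/
def Dm (dx : ℝ) (v : ℤ → ℝ) (j : ℤ) : ℝ := (v j - v (j - 1)) / dx

/-- Forward difference `D₊v_j = (v_{j+1} - v_j)/Δx`. -/
def Dp (dx : ℝ) (v : ℤ → ℝ) (j : ℤ) : ℝ := (v (j + 1) - v j) / dx

/-- The square of the discrete `ℓ²` norm: `‖v‖² = Δx Σ_j v_j²`. -/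
def l2sq (dx : ℝ) (v : ℤ → ℝ) : ℝ := dx * ∑' j : ℤ, (v j) ^ 2

/-- The fully-discrete capillarity scheme
`D₊ᵗu^n_j + D₋h^n_{j+1/2} = βΔx·D₊D₋u^n_j + γμ(Δx)·D₊ᵗD₊D₋u^n_j`
with initial data the cell averages of `u0`. -/
def capScheme (f k u0 : ℝ → ℝ) (β γ μ dx dt : ℝ) (u : ℕ → ℤ → ℝ) : Prop :=
  (∀ j : ℤ, u 0 j =
      (1 / dx) * ∫ x in ((j : ℝ) * dx - dx / 2)..((j : ℝ) * dx + dx / 2), u0 x) ∧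
  ∀ (n : ℕ) (j : ℤ),
    (u (n + 1) j - u n j) / dt + Dm dx (numFlux f k dx (u n)) j
      = β * dx * Dp dx (Dm dx (u n)) j
        + γ * μ * ((Dp dx (Dm dx (u (n + 1))) j - Dp dx (Dm dx (u n)) j) / dt)

/-- The fully-discrete diffusive–dispersive scheme
`D₊ᵗu^n_j + D₋h^n_{j+1/2} = βΔx·D₊D₋u^n_j + γμ(Δx)·D₊D₋D₋u^n_j`
with initial data the cell averages of `u0`. -/
def ddScheme (f k u0 : ℝ → ℝ) (β γ μ dx dt : ℝ) (u : ℕ → ℤ → ℝ) : Prop :=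
  (∀ j : ℤ, u 0 j =
      (1 / dx) * ∫ x in ((j : ℝ) * dx - dx / 2)..((j : ℝ) * dx + dx / 2), u0 x) ∧
  ∀ (n : ℕ) (j : ℤ),
    (u (n + 1) j - u n j) / dt + Dm dx (numFlux f k dx (u n)) j
      = β * dx * Dp dx (Dm dx (u n)) j
        + γ * μ * Dp dx (Dm dx (Dm dx (u n))) j

/-- The CFL condition for the capillarity scheme. -/
def cflCap (f k : ℝ → ℝ) (β γ μ dx dt δ : ℝ) : Prop :=
  max (2 * max (supNorm f) (max (supNorm (deriv f)) (supNorm k)) + (dt / dx) / 2)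
      ((dt / dx) / 2 * (1 + β * dx ^ 2 / (γ * μ)))
    ≤ min (1 - δ) (β - δ)

/-- The explicit CFL condition for the diffusive–dispersive scheme. -/
def cflDD (f k : ℝ → ℝ) (β γ μ dx dt δ : ℝ) : Prop :=
  max (2 * (dt / dx) * (β ^ 2 * dx ^ 2 / (γ * μ) + 2 * γ * μ / dx ^ 2))
      (8 * (dt / dx) * supNorm k ^ 2 * supNorm (deriv f) ^ 2)
    ≤ min (1 - δ) (β - δ)

/-- The piecewise-constant interpolant `u_{Δx}(x,t) = u^n_j` on
`[x_{j-1/2}, x_{j+1/2}) × [t^n, t^{n+1})`. -/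
def pcInterp (dx dt : ℝ) (u : ℕ → ℤ → ℝ) (p : ℝ × ℝ) : ℝ :=
  u (⌊p.2 / dt⌋.toNat) ⌊p.1 / dx + 1 / 2⌋

/-- Finite support of the grid function at each time level. -/
def finSupp (u : ℕ → ℤ → ℝ) : Prop :=
  ∀ n : ℕ, ∃ J : ℕ, ∀ j : ℤ, (J : ℤ) < |j| → u n j = 0

/-- The `i`-th open interval of the partition of `ℝ` induced by the points `ξ 0 < ⋯ < ξ (M-1)`. -/
def pieceSet (M : ℕ) (ξ : Fin M → ℝ) (i : Fin (M + 1)) : Set ℝ :=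
  {x | (∀ m : Fin M, (m : ℕ) < (i : ℕ) → ξ m < x) ∧ (∀ m : Fin M, (i : ℕ) ≤ (m : ℕ) → x < ξ m)}

/-- `k` is piecewise Lipschitz: on each piece of the partition induced by `ξ`, it agrees with a
globally Lipschitz function (in particular it is Lipschitz on the closure of each piece, up to
redefining it at the partition points). -/
def piecewiseLip (M : ℕ) (ξ : Fin M → ℝ) (k : ℝ → ℝ) : Prop :=
  ∀ i : Fin (M + 1), ∃ (κ : ℝ → ℝ) (L : NNReal),
    LipschitzWith L κ ∧ ∀ x ∈ pieceSet M ξ i, k x = κ x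

end


section AuxProofs

lemma abs_le_supNorm (g : ℝ → ℝ) (h : ∃ C, ∀ x, |g x| ≤ C) (x : ℝ) : |g x| ≤ supNorm g := by
  obtain ⟨C, hC⟩ := h
  exact le_ciSup ⟨C, by rintro y ⟨z, rfl⟩; exact hC z⟩ x

lemma supNorm_nonneg (g : ℝ → ℝ) (h : ∃ C, ∀ x, |g x| ≤ C) : 0 ≤ supNorm g :=
  (abs_nonneg _).trans (abs_le_supNorm g h 0)

lemma totalVar_nonneg (k : ℝ → ℝ) : 0 ≤ totalVar k := ENNReal.toReal_nonneg

lemma eo_sub_both {f : ℝ → ℝ} (hf : ContDiff ℝ 1 f) {F' : ℝ} (hF' : ∀ x, |deriv f x| ≤ F')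
    (u v : ℝ) :
    |eoFlux f u v - f u| ≤ F' * |v - u| ∧ |eoFlux f u v - f v| ≤ F' * |v - u| := by
  have hfd : f v - f u = ∫ s in u..v, deriv f s := by
    refine (intervalIntegral.integral_deriv_eq_sub
      (fun x _ => (hf.differentiable one_ne_zero).differentiableAt) ?_).symm
    exact ((hf.continuous_deriv le_rfl).intervalIntegrable u v)
  have h1 : |f v - f u| ≤ F' * |v - u| := by
    rw [hfd]
    simpa [Real.norm_eq_abs] using
      intervalIntegral.norm_integral_le_of_norm_le_const (C := F')
        (f := deriv f) (a := u) (b := v) (fun x _ => by simpa [Real.norm_eq_abs] using hF' x)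
  have h2 : |(∫ s in u..v, |deriv f s|)| ≤ F' * |v - u| := by
    simpa [Real.norm_eq_abs] using
      intervalIntegral.norm_integral_le_of_norm_le_const (C := F')
        (f := fun s => |deriv f s|) (a := u) (b := v)
        (fun x _ => by simpa [Real.norm_eq_abs, abs_abs] using hF' x)
  have h1' : |f u - f v| ≤ F' * |v - u| := by rw [abs_sub_comm]; exact h1
  constructor
  · have hid : eoFlux f u v - f u = (f v - f u) / 2 - (∫ s in u..v, |deriv f s|) / 2 := by
      unfold eoFlux; ring
    rw [hid]
    calc |(f v - f u) / 2 - (∫ s in u..v, |deriv f s|) / 2|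
        ≤ |(f v - f u) / 2| + |(∫ s in u..v, |deriv f s|) / 2| := abs_sub _ _
      _ = |f v - f u| / 2 + |(∫ s in u..v, |deriv f s|)| / 2 := by
          rw [abs_div, abs_div]; norm_num
      _ ≤ F' * |v - u| / 2 + F' * |v - u| / 2 := by linarith
      _ = F' * |v - u| := by ring
  · have hid : eoFlux f u v - f v = (f u - f v) / 2 - (∫ s in u..v, |deriv f s|) / 2 := by
      unfold eoFlux; ring
    rw [hid]
    calc |(f u - f v) / 2 - (∫ s in u..v, |deriv f s|) / 2|
        ≤ |(f u - f v) / 2| + |(∫ s in u..v, |deriv f s|) / 2| := abs_sub _ _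
      _ = |f u - f v| / 2 + |(∫ s in u..v, |deriv f s|)| / 2 := by
          rw [abs_div, abs_div]; norm_num
      _ ≤ F' * |v - u| / 2 + F' * |v - u| / 2 := by linarith
      _ = F' * |v - u| := by ring

lemma signFlux_near_left {f : ℝ → ℝ} (hf : ContDiff ℝ 1 f) {F' : ℝ}
    (hF' : ∀ x, |deriv f x| ≤ F') (kh : ℤ → ℝ) (v : ℤ → ℝ) (j : ℤ) :
    |signFlux f kh v j - f (v j)| ≤ F' * |v (j + 1) - v j| := by
  unfold signFlux
  split
  · exact (eo_sub_both hf hF' (v j) (v (j + 1))).1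
  · have := (eo_sub_both hf hF' (v (j + 1)) (v j)).2
    rwa [abs_sub_comm (v j) (v (j + 1))] at this

lemma signFlux_near_right {f : ℝ → ℝ} (hf : ContDiff ℝ 1 f) {F' : ℝ}
    (hF' : ∀ x, |deriv f x| ≤ F') (kh : ℤ → ℝ) (v : ℤ → ℝ) (j : ℤ) :
    |signFlux f kh v j - f (v (j + 1))| ≤ F' * |v (j + 1) - v j| := by
  unfold signFlux
  split
  · exact (eo_sub_both hf hF' (v j) (v (j + 1))).2
  · have := (eo_sub_both hf hF' (v (j + 1)) (v j)).1
    rwa [abs_sub_comm (v j) (v (j + 1))] at this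

lemma kAvg_abs_le {k : ℝ → ℝ} {dx : ℝ} (hdx : 0 < dx)
    (hkb : ∃ C, ∀ x, |k x| ≤ C) (j : ℤ) : |kAvg k dx j| ≤ supNorm k := by
  have hK0 : 0 ≤ supNorm k := supNorm_nonneg k hkb
  have h : ‖∫ x in ((j : ℝ) * dx)..((j : ℝ) * dx + dx), k x‖ ≤ supNorm k * |(j : ℝ) * dx + dx - (j : ℝ) * dx| :=
    intervalIntegral.norm_integral_le_of_norm_le_const
      (fun x _ => by simpa [Real.norm_eq_abs] using abs_le_supNorm k hkb x)
  rw [Real.norm_eq_abs] at h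
  have hd : |(j : ℝ) * dx + dx - (j : ℝ) * dx| = dx := by
    rw [show (j : ℝ) * dx + dx - (j : ℝ) * dx = dx by ring, abs_of_pos hdx]
  rw [hd] at h
  unfold kAvg
  rw [abs_mul, abs_div, abs_one, abs_of_pos hdx]
  calc 1 / dx * |∫ x in ((j : ℝ) * dx)..((j : ℝ) * dx + dx), k x|
      ≤ 1 / dx * (supNorm k * dx) := by
        apply mul_le_mul_of_nonneg_left h
        positivity
    _ = supNorm k := by field_simp

lemma chain_tv {k : ℝ → ℝ} (hkBV : BoundedVariationOn k Set.univ)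
    {p : ℕ → ℝ} (hp : Monotone p) (N : ℕ) :
    ∑ i ∈ Finset.range N, |k (p (i + 1)) - k (p i)| ≤ totalVar k := by
  have h := eVariationOn.sum_le (f := k) (n := N) hp (fun i => Set.mem_univ (p i))
  have heq : ENNReal.ofReal (∑ i ∈ Finset.range N, |k (p (i + 1)) - k (p i)|)
      = ∑ i ∈ Finset.range N, edist (k (p (i + 1))) (k (p i)) := by
    rw [ENNReal.ofReal_sum_of_nonneg (fun i _ => abs_nonneg _)]
    refine Finset.sum_congr rfl (fun i _ => ?_)
    rw [edist_dist, Real.dist_eq]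
  have h2 : ENNReal.ofReal (∑ i ∈ Finset.range N, |k (p (i + 1)) - k (p i)|) ≤ eVariationOn k Set.univ := heq ▸ h
  have h3 := ENNReal.toReal_mono hkBV h2
  rwa [ENNReal.toReal_ofReal (Finset.sum_nonneg (fun i _ => abs_nonneg _))] at h3

lemma sum_shift_tv {k : ℝ → ℝ} {dx : ℝ} (hdx : 0 < dx)
    (hkBV : BoundedVariationOn k Set.univ) (S : Finset ℤ) (y : ℝ) :
    ∑ j ∈ S, |k (y + (j : ℝ) * dx) - k (y + ((j : ℝ) - 1) * dx)| ≤ totalVar k := by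
  rcases S.eq_empty_or_nonempty with rfl | hS
  · simpa using totalVar_nonneg k
  set m := S.min' hS with hm
  set M := S.max' hS with hM
  have hmM : m ≤ M := S.min'_le M (S.max'_mem hS)
  set N : ℕ := (M - m).toNat + 1 with hN
  set p : ℕ → ℝ := fun i => y + ((m : ℝ) - 1 + (i : ℝ)) * dx with hpdef
  have hp : Monotone p := by
    intro i i' hii
    simp only [hpdef]
    have : ((i : ℝ)) ≤ (i' : ℝ) := by exact_mod_cast hii
    nlinarith [hdx.le]
  have hsub : S ⊆ Finset.Icc m M := by
    intro j hj
    exact Finset.mem_Icc.2 ⟨S.min'_le j hj, S.le_max' j hj⟩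
  have hmono : ∑ j ∈ S, |k (y + (j : ℝ) * dx) - k (y + ((j : ℝ) - 1) * dx)|
      ≤ ∑ j ∈ Finset.Icc m M, |k (y + (j : ℝ) * dx) - k (y + ((j : ℝ) - 1) * dx)| :=
    Finset.sum_le_sum_of_subset_of_nonneg hsub (fun j _ _ => abs_nonneg _)
  have hre : ∑ j ∈ Finset.Icc m M, |k (y + (j : ℝ) * dx) - k (y + ((j : ℝ) - 1) * dx)|
      = ∑ i ∈ Finset.range N, |k (p (i + 1)) - k (p i)| := by
    refine Finset.sum_nbij' (fun j => (j - m).toNat) (fun i => m + (i : ℤ)) ?_ ?_ ?_ ?_ ?_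
    · intro j hj
      rw [Finset.mem_Icc] at hj
      rw [Finset.mem_range, hN]
      beta_reduce
      omega
    · intro i hi
      rw [Finset.mem_range, hN] at hi
      rw [Finset.mem_Icc]
      beta_reduce
      omega
    · intro j hj
      rw [Finset.mem_Icc] at hj
      beta_reduce
      omega
    · intro i hi
      rw [Finset.mem_range, hN] at hi
      beta_reduce
      omega
    · intro j hj
      rw [Finset.mem_Icc] at hj
      have h1 : (((j - m).toNat : ℕ) : ℝ) = (j : ℝ) - (m : ℝ) := by
        have : (((j - m).toNat : ℕ) : ℤ) = j - m := Int.toNat_of_nonneg (by omega)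
        exact_mod_cast this
      simp only [hpdef]
      have e1 : y + ((m : ℝ) - 1 + (((j - m).toNat + 1 : ℕ) : ℝ)) * dx = y + (j : ℝ) * dx := by
        push_cast
        rw [h1]; ring
      have e2 : y + ((m : ℝ) - 1 + (((j - m).toNat : ℕ) : ℝ)) * dx = y + ((j : ℝ) - 1) * dx := by
        rw [h1]; ring
      rw [e1, e2]
  rw [hre] at hmono
  exact hmono.trans (chain_tv hkBV hp N)

lemma kAvg_shift_repr {k : ℝ → ℝ} {dx : ℝ}
    (hkloc : MeasureTheory.LocallyIntegrable k MeasureTheory.volume) (c : ℝ) (hdx : 0 < dx) :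
    (IntervalIntegrable (fun y => k (y + c)) MeasureTheory.volume 0 dx) ∧
      (∫ y in (0 : ℝ)..dx, k (y + c)) = ∫ x in c..(c + dx), k x := by
  constructor
  · have h1 : MeasureTheory.IntegrableOn k (Set.uIcc c (dx + c)) MeasureTheory.volume :=
      hkloc.integrableOn_isCompact isCompact_uIcc
    have h2 : IntervalIntegrable k MeasureTheory.volume c (dx + c) := h1.intervalIntegrable
    have h3 := h2.comp_add_right c
    simpa using h3
  · rw [intervalIntegral.integral_comp_add_right k c]
    rw [zero_add, add_comm dx c]

lemma kavg_tv {k : ℝ → ℝ} {dx : ℝ} (hdx : 0 < dx)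
    (hkBV : BoundedVariationOn k Set.univ)
    (hkloc : MeasureTheory.LocallyIntegrable k MeasureTheory.volume) (S : Finset ℤ) :
    ∑ j ∈ S, |kAvg k dx j - kAvg k dx (j - 1)| ≤ totalVar k := by
  have hint : ∀ c : ℝ, IntervalIntegrable (fun y => k (y + c)) MeasureTheory.volume 0 dx :=
    fun c => (kAvg_shift_repr hkloc c hdx).1
  have hrepr : ∀ j : ℤ, kAvg k dx j = (1 / dx) * ∫ y in (0 : ℝ)..dx, k (y + (j : ℝ) * dx) := by
    intro j
    unfold kAvg
    rw [(kAvg_shift_repr hkloc ((j : ℝ) * dx) hdx).2]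
  have hgint : ∀ j : ℤ, IntervalIntegrable
      (fun y => |k (y + (j : ℝ) * dx) - k (y + ((j : ℝ) - 1) * dx)|) MeasureTheory.volume 0 dx :=
    fun j => ((hint ((j : ℝ) * dx)).sub (hint (((j : ℝ) - 1) * dx))).abs
  have hterm : ∀ j : ℤ, |kAvg k dx j - kAvg k dx (j - 1)|
      ≤ (1 / dx) * ∫ y in (0 : ℝ)..dx, |k (y + (j : ℝ) * dx) - k (y + ((j : ℝ) - 1) * dx)| := by
    intro j
    rw [hrepr j, hrepr (j - 1)]
    have hc : (((j - 1 : ℤ)) : ℝ) = (j : ℝ) - 1 := by push_cast; ring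
    rw [hc]
    rw [← mul_sub]
    rw [← intervalIntegral.integral_sub (hint ((j : ℝ) * dx)) (hint (((j : ℝ) - 1) * dx))]
    rw [abs_mul, abs_div, abs_one, abs_of_pos hdx]
    apply mul_le_mul_of_nonneg_left _ (by positivity)
    have := intervalIntegral.norm_integral_le_integral_norm
      (f := fun y => k (y + (j : ℝ) * dx) - k (y + ((j : ℝ) - 1) * dx))
      (a := (0:ℝ)) (b := dx) (μ := MeasureTheory.volume) hdx.le
    simpa [Real.norm_eq_abs] using this
  calc ∑ j ∈ S, |kAvg k dx j - kAvg k dx (j - 1)|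
      ≤ ∑ j ∈ S, (1 / dx) * ∫ y in (0 : ℝ)..dx, |k (y + (j : ℝ) * dx) - k (y + ((j : ℝ) - 1) * dx)| :=
        Finset.sum_le_sum (fun j _ => hterm j)
    _ = (1 / dx) * ∑ j ∈ S, ∫ y in (0 : ℝ)..dx, |k (y + (j : ℝ) * dx) - k (y + ((j : ℝ) - 1) * dx)| := by
        rw [Finset.mul_sum]
    _ = (1 / dx) * ∫ y in (0 : ℝ)..dx, ∑ j ∈ S, |k (y + (j : ℝ) * dx) - k (y + ((j : ℝ) - 1) * dx)| := by
        rw [intervalIntegral.integral_finset_sum (fun j _ => hgint j)]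
    _ ≤ (1 / dx) * ∫ y in (0 : ℝ)..dx, totalVar k := by
        apply mul_le_mul_of_nonneg_left _ (by positivity)
        have hsint : IntervalIntegrable
            (fun y => ∑ j ∈ S, |k (y + (j : ℝ) * dx) - k (y + ((j : ℝ) - 1) * dx)|)
            MeasureTheory.volume 0 dx := by
          have hh := IntervalIntegrable.sum S (fun j (_ : j ∈ S) => hgint j)
          have heqf : (fun y => ∑ j ∈ S, |k (y + (j : ℝ) * dx) - k (y + ((j : ℝ) - 1) * dx)|)
              = ∑ j ∈ S, (fun y => |k (y + (j : ℝ) * dx) - k (y + ((j : ℝ) - 1) * dx)|) := by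
            funext y; simp
          rw [heqf]
          exact hh
        apply intervalIntegral.integral_mono_on hdx.le hsint intervalIntegrable_const
        intro y _
        exact sum_shift_tv hdx hkBV S y
    _ = totalVar k := by
        rw [intervalIntegral.integral_const, sub_zero, smul_eq_mul]
        field_simp

lemma quad_bound {D t a b K F F' : ℝ} (ht0 : 0 ≤ t) (ha0 : 0 ≤ a) (hb0 : 0 ≤ b)
    (hD0 : 0 ≤ D) (hK0 : 0 ≤ K) (hF0 : 0 ≤ F) (hF'0 : 0 ≤ F') (ht2K : t ≤ 2 * K)
    (hDle : D ≤ t * F + K * (F' * a) + K * (F' * b)) :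
    D ^ 2 ≤ 4 * K * F ^ 2 * t + 4 * K ^ 2 * F' ^ 2 * (a ^ 2 + b ^ 2) := by
  have hX0 : 0 ≤ t * F := mul_nonneg ht0 hF0
  have hY0 : 0 ≤ K * F' * (a + b) := mul_nonneg (mul_nonneg hK0 hF'0) (add_nonneg ha0 hb0)
  have hDXY : D ≤ t * F + K * F' * (a + b) := by linarith [hDle]
  have h1 : D ^ 2 ≤ (t * F + K * F' * (a + b)) ^ 2 := by nlinarith
  have h2 : (t * F + K * F' * (a + b)) ^ 2 ≤ 2 * (t * F) ^ 2 + 2 * (K * F' * (a + b)) ^ 2 := by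
    nlinarith [sq_nonneg (t * F - K * F' * (a + b))]
  have htt : t * t ≤ 2 * K * t := mul_le_mul_of_nonneg_right ht2K ht0
  have h3 : (t * F) ^ 2 ≤ 2 * K * t * F ^ 2 := by
    nlinarith [mul_le_mul_of_nonneg_right htt (sq_nonneg F)]
  have h4 : (K * F' * (a + b)) ^ 2 ≤ 2 * K ^ 2 * F' ^ 2 * (a ^ 2 + b ^ 2) := by
    nlinarith [sq_nonneg (a - b), mul_nonneg (mul_nonneg hK0 hK0) (mul_nonneg hF'0 hF'0)]
  linarith

end AuxProofs

/-- discrete `ℓ²` bound on the backward difference of the sign-adapted numerical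
flux `h^n_{j+1/2} = k_{j+1/2} f̂^n_{j+1/2}`. -/
theorem flux_difference_l2_bound (f k : ℝ → ℝ) (u : ℕ → ℤ → ℝ) (dx dt : ℝ)
    (hdx : 0 < dx) (hdt : 0 < dt)
    (hf : ContDiff ℝ 1 f)
    (hfb : ∃ C, ∀ x, |f x| ≤ C)
    (hf'b : ∃ C, ∀ x, |deriv f x| ≤ C)
    (hkb : ∃ C, ∀ x, |k x| ≤ C)
    (hkBV : BoundedVariationOn k Set.univ)
    (hkloc : LocallyIntegrable k volume)
    (hsupp : finSupp u) :
    ∀ n : ℕ,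
      dt * l2sq dx (Dm dx (numFlux f k dx (u n)))
        ≤ 4 * (dt / dx) * supNorm k * supNorm f ^ 2 * totalVar k
          + 4 * dt * supNorm k ^ 2 * supNorm (deriv f) ^ 2 *
              (l2sq dx (Dm dx (u n)) + l2sq dx (Dp dx (u n))) := by
  intro n
  set F := supNorm f with hF
  set F' := supNorm (deriv f) with hF'
  set K := supNorm k with hK
  set v := u n with hv
  have hF0 : 0 ≤ F := supNorm_nonneg f hfb
  have hF'0 : 0 ≤ F' := supNorm_nonneg (deriv f) hf'b
  have hK0 : 0 ≤ K := supNorm_nonneg k hkb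
  have hTV0 : 0 ≤ totalVar k := totalVar_nonneg k
  have hfle : ∀ x, |f x| ≤ F := abs_le_supNorm f hfb
  have hf'le : ∀ x, |deriv f x| ≤ F' := abs_le_supNorm (deriv f) hf'b
  have hkAvg : ∀ j : ℤ, |kAvg k dx j| ≤ K := kAvg_abs_le hdx hkb
  -- finite support data
  obtain ⟨J, hJ⟩ := hsupp n
  -- summability of the difference quotients of u n
  have hDm0 : ∀ j : ℤ, j ∉ Finset.Icc (-(J : ℤ) - 1) ((J : ℤ) + 1) → Dm dx v j = 0 := by
    intro j hj
    rw [Finset.mem_Icc] at hj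
    have h1 : v j = 0 := hJ j (by rw [Int.abs_eq_natAbs]; omega)
    have h2 : v (j - 1) = 0 := hJ (j - 1) (by rw [Int.abs_eq_natAbs]; omega)
    unfold Dm; rw [h1, h2]; simp
  have hDp0 : ∀ j : ℤ, j ∉ Finset.Icc (-(J : ℤ) - 1) ((J : ℤ) + 1) → Dp dx v j = 0 := by
    intro j hj
    rw [Finset.mem_Icc] at hj
    have h1 : v j = 0 := hJ j (by rw [Int.abs_eq_natAbs]; omega)
    have h2 : v (j + 1) = 0 := hJ (j + 1) (by rw [Int.abs_eq_natAbs]; omega)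
    unfold Dp; rw [h1, h2]; simp
  have hsumDm : Summable (fun j : ℤ => (Dm dx v j) ^ 2) :=
    summable_of_ne_finset_zero (s := Finset.Icc (-(J : ℤ) - 1) ((J : ℤ) + 1))
      (fun j hj => by rw [hDm0 j hj]; ring)
  have hsumDp : Summable (fun j : ℤ => (Dp dx v j) ^ 2) :=
    summable_of_ne_finset_zero (s := Finset.Icc (-(J : ℤ) - 1) ((J : ℤ) + 1))
      (fun j hj => by rw [hDp0 j hj]; ring)
  set Tm := ∑' j : ℤ, (Dm dx v j) ^ 2 with hTm
  set Tp := ∑' j : ℤ, (Dp dx v j) ^ 2 with hTp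
  have hTm0 : 0 ≤ Tm := tsum_nonneg (fun j => sq_nonneg _)
  have hTp0 : 0 ≤ Tp := tsum_nonneg (fun j => sq_nonneg _)
  -- per-j bound on flux differences
  have hflux : ∀ j : ℤ, |numFlux f k dx v j - numFlux f k dx v (j - 1)|
      ≤ |kAvg k dx j - kAvg k dx (j - 1)| * F + K * (F' * |v (j + 1) - v j|) + K * (F' * |v j - v (j - 1)|) := by
    intro j
    have hid : numFlux f k dx v j - numFlux f k dx v (j - 1)
        = (kAvg k dx j - kAvg k dx (j - 1)) * f (v j)
          + kAvg k dx j * (signFlux f (kAvg k dx) v j - f (v j))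
          - kAvg k dx (j - 1) * (signFlux f (kAvg k dx) v (j - 1) - f (v j)) := by
      unfold numFlux; ring
    rw [hid]
    have hb1 : |(kAvg k dx j - kAvg k dx (j - 1)) * f (v j)| ≤ |kAvg k dx j - kAvg k dx (j - 1)| * F := by
      rw [abs_mul]
      exact mul_le_mul_of_nonneg_left (hfle (v j)) (abs_nonneg _)
    have hb2 : |kAvg k dx j * (signFlux f (kAvg k dx) v j - f (v j))| ≤ K * (F' * |v (j + 1) - v j|) := by
      rw [abs_mul]
      exact mul_le_mul (hkAvg j) (signFlux_near_left hf hf'le (kAvg k dx) v j) (abs_nonneg _) hK0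
    have hb3 : |kAvg k dx (j - 1) * (signFlux f (kAvg k dx) v (j - 1) - f (v j))|
        ≤ K * (F' * |v j - v (j - 1)|) := by
      rw [abs_mul]
      have h := signFlux_near_right hf hf'le (kAvg k dx) v (j - 1)
      rw [show j - 1 + 1 = j by ring] at h
      exact mul_le_mul (hkAvg (j - 1)) h (abs_nonneg _) hK0
    calc |(kAvg k dx j - kAvg k dx (j - 1)) * f (v j)
          + kAvg k dx j * (signFlux f (kAvg k dx) v j - f (v j))
          - kAvg k dx (j - 1) * (signFlux f (kAvg k dx) v (j - 1) - f (v j))|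
        ≤ |(kAvg k dx j - kAvg k dx (j - 1)) * f (v j)
            + kAvg k dx j * (signFlux f (kAvg k dx) v j - f (v j))|
          + |kAvg k dx (j - 1) * (signFlux f (kAvg k dx) v (j - 1) - f (v j))| := abs_sub _ _
      _ ≤ |(kAvg k dx j - kAvg k dx (j - 1)) * f (v j)|
          + |kAvg k dx j * (signFlux f (kAvg k dx) v j - f (v j))|
          + |kAvg k dx (j - 1) * (signFlux f (kAvg k dx) v (j - 1) - f (v j))| := by
            have := abs_add_le ((kAvg k dx j - kAvg k dx (j - 1)) * f (v j))
              (kAvg k dx j * (signFlux f (kAvg k dx) v j - f (v j)))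
            linarith
      _ ≤ |kAvg k dx j - kAvg k dx (j - 1)| * F + K * (F' * |v (j + 1) - v j|)
          + K * (F' * |v j - v (j - 1)|) := by linarith
  -- per-j quadratic bound
  have hsq : ∀ j : ℤ, (Dm dx (numFlux f k dx v) j) ^ 2
      ≤ 4 * K * F ^ 2 * |kAvg k dx j - kAvg k dx (j - 1)| / dx ^ 2
        + 4 * K ^ 2 * F' ^ 2 * ((Dm dx v j) ^ 2 + (Dp dx v j) ^ 2) := by
    intro j
    have ht0 : (0:ℝ) ≤ |kAvg k dx j - kAvg k dx (j - 1)| := abs_nonneg _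
    have ht2K : |kAvg k dx j - kAvg k dx (j - 1)| ≤ 2 * K := by
      calc |kAvg k dx j - kAvg k dx (j - 1)| ≤ |kAvg k dx j| + |kAvg k dx (j - 1)| := abs_sub _ _
        _ ≤ K + K := add_le_add (hkAvg j) (hkAvg (j - 1))
        _ = 2 * K := by ring
    have hDsq : |numFlux f k dx v j - numFlux f k dx v (j - 1)| ^ 2
        ≤ 4 * K * F ^ 2 * |kAvg k dx j - kAvg k dx (j - 1)|
          + 4 * K ^ 2 * F' ^ 2 * (|v (j + 1) - v j| ^ 2 + |v j - v (j - 1)| ^ 2) :=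
      quad_bound ht0 (abs_nonneg _) (abs_nonneg _) (abs_nonneg _) hK0 hF0 hF'0 ht2K (hflux j)
    have hDm_eq : (Dm dx (numFlux f k dx v) j) ^ 2
        = (numFlux f k dx v j - numFlux f k dx v (j - 1)) ^ 2 / dx ^ 2 := by
      unfold Dm; rw [div_pow]
    have hDabs : (numFlux f k dx v j - numFlux f k dx v (j - 1)) ^ 2
        = |numFlux f k dx v j - numFlux f k dx v (j - 1)| ^ 2 := (sq_abs _).symm
    have haD : |v (j + 1) - v j| ^ 2 = dx ^ 2 * (Dp dx v j) ^ 2 := by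
      rw [sq_abs]
      unfold Dp
      field_simp
    have hbD : |v j - v (j - 1)| ^ 2 = dx ^ 2 * (Dm dx v j) ^ 2 := by
      rw [sq_abs]
      unfold Dm
      field_simp
    rw [hDm_eq, hDabs]
    rw [div_le_iff₀ (by positivity : (0:ℝ) < dx ^ 2)]
    calc |numFlux f k dx v j - numFlux f k dx v (j - 1)| ^ 2
        ≤ 4 * K * F ^ 2 * |kAvg k dx j - kAvg k dx (j - 1)|
          + 4 * K ^ 2 * F' ^ 2 * (|v (j + 1) - v j| ^ 2 + |v j - v (j - 1)| ^ 2) := hDsq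
      _ = 4 * K * F ^ 2 * |kAvg k dx j - kAvg k dx (j - 1)|
          + 4 * K ^ 2 * F' ^ 2 * (dx ^ 2 * (Dp dx v j) ^ 2 + dx ^ 2 * (Dm dx v j) ^ 2) := by
          rw [haD, hbD]
      _ = (4 * K * F ^ 2 * |kAvg k dx j - kAvg k dx (j - 1)| / dx ^ 2
          + 4 * K ^ 2 * F' ^ 2 * ((Dm dx v j) ^ 2 + (Dp dx v j) ^ 2)) * dx ^ 2 := by
          field_simp
          ring
  -- finite-set bound for the flux difference tsum
  have hC0 : 0 ≤ 4 * K * F ^ 2 * totalVar k / dx ^ 2 + 4 * K ^ 2 * F' ^ 2 * (Tm + Tp) := by positivity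
  have hfin : ∀ S : Finset ℤ, ∑ j ∈ S, (Dm dx (numFlux f k dx v) j) ^ 2
      ≤ 4 * K * F ^ 2 * totalVar k / dx ^ 2 + 4 * K ^ 2 * F' ^ 2 * (Tm + Tp) := by
    intro S
    have h1 : ∑ j ∈ S, (Dm dx (numFlux f k dx v) j) ^ 2
        ≤ ∑ j ∈ S, (4 * K * F ^ 2 * |kAvg k dx j - kAvg k dx (j - 1)| / dx ^ 2
            + 4 * K ^ 2 * F' ^ 2 * ((Dm dx v j) ^ 2 + (Dp dx v j) ^ 2)) :=
      Finset.sum_le_sum (fun j _ => hsq j)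
    have h2 : ∑ j ∈ S, 4 * K * F ^ 2 * |kAvg k dx j - kAvg k dx (j - 1)| / dx ^ 2
        ≤ 4 * K * F ^ 2 * totalVar k / dx ^ 2 := by
      have hs := kavg_tv hdx hkBV hkloc S
      have heq2 : ∑ j ∈ S, 4 * K * F ^ 2 * |kAvg k dx j - kAvg k dx (j - 1)| / dx ^ 2
          = (4 * K * F ^ 2 / dx ^ 2) * ∑ j ∈ S, |kAvg k dx j - kAvg k dx (j - 1)| := by
        rw [Finset.mul_sum]
        exact Finset.sum_congr rfl (fun j _ => by ring)
      rw [heq2]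
      have hc : (0:ℝ) ≤ 4 * K * F ^ 2 / dx ^ 2 := by positivity
      calc (4 * K * F ^ 2 / dx ^ 2) * ∑ j ∈ S, |kAvg k dx j - kAvg k dx (j - 1)|
          ≤ (4 * K * F ^ 2 / dx ^ 2) * totalVar k := mul_le_mul_of_nonneg_left hs hc
        _ = 4 * K * F ^ 2 * totalVar k / dx ^ 2 := by ring
    have h3m : ∑ j ∈ S, (Dm dx v j) ^ 2 ≤ Tm := Summable.sum_le_tsum S (fun j _ => sq_nonneg _) hsumDm
    have h3p : ∑ j ∈ S, (Dp dx v j) ^ 2 ≤ Tp := Summable.sum_le_tsum S (fun j _ => sq_nonneg _) hsumDp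
    have h3 : ∑ j ∈ S, 4 * K ^ 2 * F' ^ 2 * ((Dm dx v j) ^ 2 + (Dp dx v j) ^ 2)
        ≤ 4 * K ^ 2 * F' ^ 2 * (Tm + Tp) := by
      have heq3 : ∑ j ∈ S, 4 * K ^ 2 * F' ^ 2 * ((Dm dx v j) ^ 2 + (Dp dx v j) ^ 2)
          = 4 * K ^ 2 * F' ^ 2 * (∑ j ∈ S, (Dm dx v j) ^ 2 + ∑ j ∈ S, (Dp dx v j) ^ 2) := by
        rw [← Finset.sum_add_distrib, ← Finset.mul_sum]
      rw [heq3]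
      apply mul_le_mul_of_nonneg_left _ (by positivity)
      linarith
    calc ∑ j ∈ S, (Dm dx (numFlux f k dx v) j) ^ 2
        ≤ ∑ j ∈ S, (4 * K * F ^ 2 * |kAvg k dx j - kAvg k dx (j - 1)| / dx ^ 2
            + 4 * K ^ 2 * F' ^ 2 * ((Dm dx v j) ^ 2 + (Dp dx v j) ^ 2)) := h1
      _ = ∑ j ∈ S, 4 * K * F ^ 2 * |kAvg k dx j - kAvg k dx (j - 1)| / dx ^ 2
          + ∑ j ∈ S, 4 * K ^ 2 * F' ^ 2 * ((Dm dx v j) ^ 2 + (Dp dx v j) ^ 2) :=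
            Finset.sum_add_distrib
      _ ≤ 4 * K * F ^ 2 * totalVar k / dx ^ 2 + 4 * K ^ 2 * F' ^ 2 * (Tm + Tp) := by linarith
  have htsum : ∑' j : ℤ, (Dm dx (numFlux f k dx v) j) ^ 2
      ≤ 4 * K * F ^ 2 * totalVar k / dx ^ 2 + 4 * K ^ 2 * F' ^ 2 * (Tm + Tp) :=
    tsum_le_of_sum_le' hC0 hfin
  -- assemble
  unfold l2sq
  rw [← hTm, ← hTp]
  have hstep : dt * (dx * ∑' j : ℤ, (Dm dx (numFlux f k dx v) j) ^ 2)
      ≤ dt * (dx * (4 * K * F ^ 2 * totalVar k / dx ^ 2 + 4 * K ^ 2 * F' ^ 2 * (Tm + Tp))) := by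
    apply mul_le_mul_of_nonneg_left _ hdt.le
    exact mul_le_mul_of_nonneg_left htsum hdx.le
  refine hstep.trans (le_of_eq ?_)
  field_simp
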